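/- MCSAT simulates one application of the Strong Theory Derivation rule with |C| + 3 rule applications, exactly one of which is a theory rule: if C is a clause with T ⊨ C, C is not a tautology, C ∉ 𝒞, and every literal of C lies in Basis, then there is an MCSAT derivation from ⟨[],𝒞⟩ to ⟨[], 𝒞 ∪ {C}⟩ consisting of |C| applications of Decide (deciding ¬L for each literal L of C), one application of T-Conflict with explanation E = C, one application of Learn, and one application of Restart. -/

import Mathlib

/-
Shared formalization of the MCSAT transition system (de Moura–Jovanović,
extended with a Restart rule) and of the Res*(T) proof system (Robere et al.),
following "On the proof complexity of MCSAT".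
-/

namespace MCSATPaper

/-- A signature for a quantifier-free first-order theory `T`:
literals with an involutive negation, theory variables and theory values,
a (partial) evaluation of literals under (partial) theory assignments,
and a finite basis of literals. -/
structure Sig where
  /-- theory literals (constraints and negated constraints) -/
  Lit : Type
  deqLit : DecidableEq Lit
  /-- negation of a literal -/
  neg : Lit → Lit
  /-- theory variables -/
  Var : Type
  deqVar : DecidableEq Var
  /-- theory values -/
  Val : Type
  /-- partial evaluation of a literal under a partial theory assignment
  (`none` = undefined) -/
  evalLit : Lit → (Var → Option Val) → Option Bool
  /-- the theory variables occurring in a literal -/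
  lvars : Lit → Set Var
  /-- the finite basis of literals; all literals ever occurring in proofs
  are contained in it -/
  Basis : Set Lit
  finBasis : Basis.Finite

attribute [instance] Sig.deqLit Sig.deqVar

variable (S : Sig)

/-- A clause is a finite disjunction of literals. -/
abbrev Clause := Finset S.Lit

/-- Standard properties of the signature: negation is involutive, it flips the
(theory) evaluation of a literal, and no literal is defined under the empty
theory assignment. -/
def GoodSig : Prop :=
  (∀ l, S.neg (S.neg l) = l) ∧
  (∀ l f, S.evalLit (S.neg l) f = (S.evalLit l f).map (fun b => !b)) ∧
  (∀ l, S.evalLit l (fun _ => none) = none)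

/-- Trail elements: Boolean decisions, Boolean propagations `C → L`,
theory decisions `x ↦ α`, and theory propagations `E → L`. -/
inductive Elem (S : Sig) where
  | dec (l : S.Lit)
  | prop (c : Clause S) (l : S.Lit)
  | tdec (x : S.Var) (a : S.Val)
  | tprop (e : Clause S) (l : S.Lit)

/-- A trail is a list of trail elements (new elements are appended at the end). -/
abbrev Trail := List (Elem S)

/-- Decisions (Boolean or theory) among trail elements. -/
def Elem.isDecision : Elem S → Prop
  | .dec _ => True
  | .tdec _ _ => True
  | _ => False

/-- The partial theory assignment induced by the trail. -/
def assign (M : Trail S) (x : S.Var) : Option S.Val :=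
  (M.filterMap (fun e => match e with
    | .tdec y a => if y = x then some a else none
    | _ => none)).head?

/-- A literal is on the trail if it was decided or (theory-)propagated. -/
def onTrail (l : S.Lit) (M : Trail S) : Prop :=
  (Elem.dec l) ∈ M ∨ (∃ c, (Elem.prop c l) ∈ M) ∨ (∃ e, (Elem.tprop e l) ∈ M)

open Classical in
/-- `Value(L, M)`: `some true` if `L` is decided/propagated in `M` or evaluates
to true under the theory assignment of `M`, `some false` if `¬L` is
decided/propagated or `L` evaluates to false, and `none` (undef) otherwise. -/
noncomputable def value (M : Trail S) (l : S.Lit) : Option Bool :=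
  if onTrail S l M then some true
  else if onTrail S (S.neg l) M then some false
  else S.evalLit l (assign S M)

/-- A trail is consistent if the Boolean and theory evaluations never contradict. -/
def Consistent (M : Trail S) : Prop :=
  ∀ l, onTrail S l M →
    ¬ onTrail S (S.neg l) M ∧ S.evalLit l (assign S M) ≠ some false

/-- A trail is feasible if its theory assignment can be extended to a full
theory assignment satisfying all literals on the trail. -/
def Feasible (M : Trail S) : Prop :=
  ∃ f : S.Var → S.Val,
    (∀ x a, assign S M x = some a → f x = a) ∧
    (∀ l, onTrail S l M → S.evalLit l (fun x => some (f x)) = some true)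

/-- `Infeasible(M)`. -/
def Infeasible (M : Trail S) : Prop := ¬ Feasible S M

/-- `T ⊨ C`: the clause `C` is valid in the theory, i.e. every full theory
assignment makes some literal of `C` true. -/
def TValid (c : Clause S) : Prop :=
  ∀ f : S.Var → S.Val, ∃ l ∈ c, S.evalLit l (fun x => some (f x)) = some true

/-- A clause is a (propositional) tautology if it contains a literal together
with its negation. -/
def Tauto (c : Clause S) : Prop := ∃ l ∈ c, S.neg l ∈ c

/-- A trail is complete (w.r.t. a clause set) if it assigns a Boolean value to
every literal and a theory value to every theory variable of the clauses. -/
def CompleteTrail (M : Trail S) (Cs : Set (Clause S)) : Prop :=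
  (∀ c ∈ Cs, ∀ l ∈ c, value S M l ≠ none) ∧
  (∀ c ∈ Cs, ∀ l ∈ c, ∀ x ∈ S.lvars l, assign S M x ≠ none)

/-- MCSAT states: search states `⟨M, 𝒞⟩`, conflict states `⟨M, 𝒞⟩ ⊩ C`,
and the two final states `SAT` and `UNSAT`. -/
inductive State (S : Sig) where
  | search (M : Trail S) (Cs : Set (Clause S))
  | conflict (M : Trail S) (Cs : Set (Clause S)) (c : Clause S)
  | sat
  | unsat

/-- The clauses occurring on a trail as reasons of (theory) propagations. -/
def trailClauses (M : Trail S) : Set (Clause S) :=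
  {c | ∃ l, (Elem.prop c l) ∈ M ∨ (Elem.tprop c l) ∈ M}

/-- All clauses occurring in a state: the clause set, reasons of propagations
on the trail, and the conflict clause (if any). -/
def State.clauses : State S → Set (Clause S)
  | .search M Cs => Cs ∪ trailClauses S M
  | .conflict M Cs c => insert c (Cs ∪ trailClauses S M)
  | .sat => ∅
  | .unsat => ∅

/-- The names of the MCSAT proof rules. -/
inductive Rule where
  | decide | propagate | conflict | sat | forget | restart
  | resolve | consume1 | consume2 | backjump | unsat | learn
  | tPropagate | tDecide | tConflict | tConsume | tBackjumpDecide
  deriving DecidableEq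

/-- The theory rules of MCSAT. -/
def Rule.isTheory : Rule → Bool
  | .tPropagate => true | .tDecide => true | .tConflict => true
  | .tConsume => true | .tBackjumpDecide => true
  | _ => false

/-- `resolve(C, D, L)`: the propositional resolvent of the conflict clause `C`
(containing `¬L`) with the reason clause `D` (containing `L`) w.r.t. `L`. -/
def resolvent (c d : Clause S) (l : S.Lit) : Clause S :=
  (c.erase (S.neg l)) ∪ (d.erase l)

/-- The MCSAT transition system of de Moura–Jovanović (with `Restart`),
parameterized by the initial clause set `C0` (used to identify learned
clauses for `Forget`).  In the rules `T-Propagate` and `T-Conflict` the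
clause `E` produced by the `Explain` function is characterized by its
specification: it is a valid theory lemma explaining the infeasibility
(its remaining literals evaluate to false on the trail). -/
inductive Step (C0 : Set (Clause S)) : Rule → State S → State S → Prop
  | decide {M : Trail S} {Cs : Set (Clause S)} {l : S.Lit}
      (hB : l ∈ S.Basis) (hundef : value S M l = none) :
      Step C0 .decide (.search M Cs) (.search (M ++ [Elem.dec l]) Cs)
  | propagate {M : Trail S} {Cs : Set (Clause S)} {c : Clause S} {l : S.Lit}
      (hc : c ∈ Cs) (hl : l ∈ c)
      (hfalse : ∀ l' ∈ c.erase l, value S M l' = some false)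
      (hundef : value S M l = none) :
      Step C0 .propagate (.search M Cs) (.search (M ++ [Elem.prop c l]) Cs)
  | conflict {M : Trail S} {Cs : Set (Clause S)} {c : Clause S}
      (hc : c ∈ Cs) (hfalse : ∀ l ∈ c, value S M l = some false) :
      Step C0 .conflict (.search M Cs) (.conflict M Cs c)
  | sat {M : Trail S} {Cs : Set (Clause S)}
      (hcomp : CompleteTrail S M Cs)
      (hsat : ∀ c ∈ Cs, ∃ l ∈ c, value S M l = some true) :
      Step C0 .sat (.search M Cs) .sat
  | forget {M : Trail S} {Cs : Set (Clause S)} {c : Clause S}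
      (hc : c ∈ Cs) (hlearned : c ∉ C0) :
      Step C0 .forget (.search M Cs) (.search M (Cs \ {c}))
  | restart {M : Trail S} {Cs : Set (Clause S)} {c : Clause S} :
      Step C0 .restart (.conflict M Cs c) (.search [] Cs)
  | resolve {M : Trail S} {Cs : Set (Clause S)} {c d : Clause S} {l : S.Lit}
      (hnl : S.neg l ∈ c) (hl : l ∈ d) :
      Step C0 .resolve (.conflict (M ++ [Elem.prop d l]) Cs c)
        (.conflict M Cs (resolvent S c d l))
  | consume1 {M : Trail S} {Cs : Set (Clause S)} {c d : Clause S} {l : S.Lit}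
      (h : S.neg l ∉ c) :
      Step C0 .consume1 (.conflict (M ++ [Elem.prop d l]) Cs c) (.conflict M Cs c)
  | consume1T {M : Trail S} {Cs : Set (Clause S)} {c e : Clause S} {l : S.Lit}
      (h : S.neg l ∉ c) :
      Step C0 .consume1 (.conflict (M ++ [Elem.tprop e l]) Cs c) (.conflict M Cs c)
  | consume2 {M : Trail S} {Cs : Set (Clause S)} {c : Clause S} {l : S.Lit}
      (h : S.neg l ∉ c) :
      Step C0 .consume2 (.conflict (M ++ [Elem.dec l]) Cs c) (.conflict M Cs c)
  | backjump {M N : Trail S} {Cs : Set (Clause S)} {c : Clause S} {l : S.Lit}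
      (hN : ∃ e, N.head? = some e ∧ Elem.isDecision S e)
      (hl : l ∈ c) (hfalse : ∀ l' ∈ c.erase l, value S M l' = some false)
      (hundef : value S M l = none) :
      Step C0 .backjump (.conflict (M ++ N) Cs c) (.search (M ++ [Elem.prop c l]) Cs)
  | unsat {M : Trail S} {Cs : Set (Clause S)} :
      Step C0 .unsat (.conflict M Cs (∅ : Clause S)) .unsat
  | learn {M : Trail S} {Cs : Set (Clause S)} {c : Clause S} (h : c ∉ Cs) :
      Step C0 .learn (.conflict M Cs c) (.conflict M (Cs ∪ {c}) c)
  | tPropagate {M : Trail S} {Cs : Set (Clause S)} {e : Clause S} {l : S.Lit}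
      (hB : l ∈ S.Basis) (hundef : value S M l = none)
      (hinf : Infeasible S (M ++ [Elem.dec (S.neg l)]))
      (hvalid : TValid S e) (hle : l ∈ e)
      (hfalse : ∀ l' ∈ e.erase l, value S M l' = some false) :
      Step C0 .tPropagate (.search M Cs) (.search (M ++ [Elem.tprop e l]) Cs)
  | tDecide {M : Trail S} {Cs : Set (Clause S)} {x : S.Var} {a : S.Val}
      (hx : ∃ c ∈ Cs, ∃ l ∈ c, x ∈ S.lvars l)
      (hundef : assign S M x = none)
      (hcons : Consistent S (M ++ [Elem.tdec x a])) :
      Step C0 .tDecide (.search M Cs) (.search (M ++ [Elem.tdec x a]) Cs)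
  | tConflict {M : Trail S} {Cs : Set (Clause S)} {e : Clause S}
      (hinf : Infeasible S M) (hvalid : TValid S e)
      (hfalse : ∀ l ∈ e, value S M l = some false) :
      Step C0 .tConflict (.search M Cs) (.conflict M Cs e)
  | tConsume {M : Trail S} {Cs : Set (Clause S)} {c : Clause S} {x : S.Var} {a : S.Val}
      (hfalse : ∀ l ∈ c, value S M l = some false) :
      Step C0 .tConsume (.conflict (M ++ [Elem.tdec x a]) Cs c) (.conflict M Cs c)
  | tBackjumpDecide {M N : Trail S} {Cs : Set (Clause S)} {c : Clause S}
      {x : S.Var} {a : S.Val} {l : S.Lit}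
      (hl : l ∈ c) (hundef : value S M l = none)
      (hother : ∃ l' ∈ c, l' ≠ l ∧ value S M l' = none) :
      Step C0 .tBackjumpDecide (.conflict (M ++ [Elem.tdec x a] ++ N) Cs c)
        (.search (M ++ [Elem.dec l]) Cs)

/-- `Trace S C0 s rules states t`: an MCSAT derivation from state `s` to
state `t` applying the listed rules and passing through the listed
intermediate states; its length is the number of rule applications. -/
inductive Trace (C0 : Set (Clause S)) : State S → List Rule → List (State S) → State S → Prop
  | refl (s : State S) : Trace C0 s [] [] s
  | step {r : Rule} {s t u : State S} {rs : List Rule} {sts : List (State S)}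
      (h1 : Step S C0 r s t) (h2 : Trace C0 t rs sts u) :
      Trace C0 s (r :: rs) (t :: sts) u

/-- The names of the Res*(T) proof rules. -/
inductive ResRule where
  | resolution | strong
  deriving DecidableEq

/-- The Res*(T) proof system on clause sets: `Resolution` derives `C ∨ D`
from `C ∨ l` and `D ∨ ¬l`; `Strong Theory Derivation` adds any clause `C`
with `T ⊨ C` (possibly containing new literals). -/
inductive ResStep : ResRule → Set (Clause S) → Set (Clause S) → Prop
  | resolution {Γ : Set (Clause S)} {c d : Clause S} {l : S.Lit}
      (hc : c ∈ Γ) (hd : d ∈ Γ) (hl : l ∈ c) (hnl : S.neg l ∈ d) :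
      ResStep .resolution Γ (Γ ∪ {c.erase l ∪ d.erase (S.neg l)})
  | strong {Γ : Set (Clause S)} {c : Clause S} (h : TValid S c) :
      ResStep .strong Γ (Γ ∪ {c})

/-- A Res*(T) derivation applying the listed rules; its length is the number
of rule applications. -/
inductive ResDeriv : Set (Clause S) → List ResRule → Set (Clause S) → Prop
  | refl (Γ : Set (Clause S)) : ResDeriv Γ [] Γ
  | step {Γ Δ Θ : Set (Clause S)} {r : ResRule} {rs : List ResRule}
      (h1 : ResStep S r Γ Δ) (h2 : ResDeriv Δ rs Θ) :
      ResDeriv Γ (r :: rs) Θ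

-- auxiliary material for statement 4
section Aux4
variable {S : Sig}

/-- The trail consisting of the decisions `¬l` for `l` in the list `xs`. -/
def decTrail (S : Sig) (xs : List S.Lit) : Trail S :=
  xs.map (fun l => Elem.dec (S.neg l))

lemma onTrail_decTrail (xs : List S.Lit) (l : S.Lit) :
    onTrail S l (decTrail S xs) ↔ l ∈ xs.map S.neg := by
  constructor
  · rintro (h | ⟨c, h⟩ | ⟨e, h⟩) <;>
      simp only [decTrail, List.mem_map] at h <;>
      obtain ⟨a, ha, heq⟩ := h
    · cases heq; exact List.mem_map.mpr ⟨a, ha, rfl⟩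
    · cases heq
    · cases heq
  · intro h
    obtain ⟨a, ha, rfl⟩ := List.mem_map.mp h
    exact Or.inl (List.mem_map.mpr ⟨a, ha, rfl⟩)

lemma assign_decTrail (xs : List S.Lit) :
    assign S (decTrail S xs) = fun _ => none := by
  funext x
  simp only [assign, decTrail, List.filterMap_map]
  have : List.filterMap
      ((fun e : Elem S => match e with
        | .tdec y a => if y = x then some a else none
        | _ => none) ∘ fun l => Elem.dec (S.neg l)) xs = [] := by
    apply List.filterMap_eq_nil_iff.mpr
    intro a _; rfl
  rw [this]; rfl

lemma value_decTrail_none (hS : GoodSig S) (xs : List S.Lit) (l : S.Lit)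
    (h1 : l ∉ xs.map S.neg) (h2 : S.neg l ∉ xs.map S.neg) :
    value S (decTrail S xs) l = none := by
  rw [value, if_neg, if_neg]
  · rw [assign_decTrail]; exact hS.2.2 l
  · rw [onTrail_decTrail]; exact h2
  · rw [onTrail_decTrail]; exact h1

lemma neg_injective (hS : GoodSig S) : Function.Injective S.neg := by
  intro a b h
  have := congrArg S.neg h
  rwa [hS.1, hS.1] at this

lemma trace_append {C0 : Set (Clause S)} {s t u : State S}
    {rs1 rs2 : List Rule} {sts1 sts2 : List (State S)}
    (h1 : Trace S C0 s rs1 sts1 t) (h2 : Trace S C0 t rs2 sts2 u) :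
    Trace S C0 s (rs1 ++ rs2) (sts1 ++ sts2) u := by
  induction h1 with
  | refl => simpa using h2
  | step hs _ ih => exact Trace.step hs (ih h2)

lemma trace_decides (hS : GoodSig S) (C0 Cs : Set (Clause S)) (C : Clause S)
    (hnt : ¬ Tauto S C)
    (hBasis : ∀ m ∈ C, m ∈ S.Basis ∧ S.neg m ∈ S.Basis) :
    ∀ (suf pre : List S.Lit), (pre ++ suf).Nodup →
      (∀ x ∈ pre ++ suf, x ∈ C) →
      ∃ sts, Trace S C0 (.search (decTrail S pre) Cs)
        (List.replicate suf.length .decide) sts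
        (.search (decTrail S (pre ++ suf)) Cs) := by
  intro suf
  induction suf with
  | nil =>
    intro pre _ _
    exact ⟨[], by simpa using Trace.refl _⟩
  | cons l t ih =>
    intro pre hnd hmem
    have hlC : l ∈ C := hmem l (by simp)
    have hstep : Step S C0 .decide (.search (decTrail S pre) Cs)
        (.search (decTrail S pre ++ [Elem.dec (S.neg l)]) Cs) := by
      refine Step.decide (hBasis l hlC).2 ?_
      apply value_decTrail_none hS
      · intro h
        obtain ⟨m, hm, hme⟩ := List.mem_map.mp h
        have hml : m = l := neg_injective hS hme
        subst hml
        have hnd' : (pre ++ m :: t).Nodup := hnd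
        rw [List.nodup_append] at hnd'
        exact hnd'.2.2 m hm m (by simp) rfl
      · intro h
        rw [hS.1] at h
        obtain ⟨m, hm, hme⟩ := List.mem_map.mp h
        have hmC : m ∈ C := hmem m (by simp [hm])
        refine hnt ⟨l, hlC, ?_⟩
        rw [show S.neg l = m from by rw [← hme, hS.1]]
        exact hmC
    have heq : decTrail S pre ++ [Elem.dec (S.neg l)] = decTrail S (pre ++ [l]) := by
      simp [decTrail]
    rw [heq] at hstep
    obtain ⟨sts, htr⟩ := ih (pre ++ [l])
      (by simpa using hnd) (by intro x hx; apply hmem; simpa using hx)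
    refine ⟨.search (decTrail S (pre ++ [l])) Cs :: sts, ?_⟩
    have : pre ++ [l] ++ t = pre ++ l :: t := by simp
    rw [this] at htr
    exact Trace.step hstep htr

end Aux4

/-- MCSAT simulates one application of the Strong Theory
Derivation rule with `|C| + 3` rule applications, exactly one of which is a
theory rule: if `C` is a clause with `T ⊨ C`, `C` is not a tautology,
`C ∉ 𝒞`, and every literal of `C` (and its negation) lies in `Basis`, then
there is an MCSAT derivation from `⟨[], 𝒞⟩` to `⟨[], 𝒞 ∪ {C}⟩` consisting of
`|C|` applications of `Decide` (deciding `¬L` for each literal `L` of `C`),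
one application of `T-Conflict` (with explanation `E = C`), one application
of `Learn`, and one application of `Restart`. -/
theorem mcsat_simulates_strong_theory_derivation (S : Sig) (hS : GoodSig S)
    (C0 Cs : Set (Clause S)) (C : Clause S)
    (hvalid : TValid S C) (hnt : ¬ Tauto S C) (hnew : C ∉ Cs)
    (hBasis : ∀ m ∈ C, m ∈ S.Basis ∧ S.neg m ∈ S.Basis) :
    ∃ sts : List (State S),
      Trace S C0 (State.search ([] : Trail S) Cs)
        (List.replicate C.card Rule.decide ++
          [Rule.tConflict, Rule.learn, Rule.restart])
        sts
        (State.search ([] : Trail S) (Cs ∪ {C})) ∧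
      (List.replicate C.card Rule.decide ++
        [Rule.tConflict, Rule.learn, Rule.restart]).length = C.card + 3 ∧
      (List.replicate C.card Rule.decide ++
        [Rule.tConflict, Rule.learn, Rule.restart]).countP
        (fun r => r.isTheory) = 1 := by

  have hnd := C.nodup_toList
  have hmem : ∀ x ∈ ([] : List S.Lit) ++ C.toList, x ∈ C := by
    intro x hx; simpa using hx
  obtain ⟨sts1, htr1⟩ := trace_decides hS C0 Cs C hnt hBasis C.toList [] (by simpa using hnd) hmem
  set M := decTrail S C.toList with hM
  have hvalM : ∀ l ∈ C, value S M l = some false := by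
    intro l hl
    rw [value, if_neg, if_pos]
    · rw [onTrail_decTrail]
      exact List.mem_map.mpr ⟨l, Finset.mem_toList.mpr hl, rfl⟩
    · rw [onTrail_decTrail]
      intro h
      obtain ⟨m, hm, hme⟩ := List.mem_map.mp h
      exact hnt ⟨l, hl, by rw [← hme, hS.1]; exact Finset.mem_toList.mp hm⟩
  have hinf : Infeasible S M := by
    rintro ⟨f, _, hf⟩
    obtain ⟨l, hl, hev⟩ := hvalid f
    have hneg : onTrail S (S.neg l) M := by
      rw [onTrail_decTrail]
      exact List.mem_map.mpr ⟨l, Finset.mem_toList.mpr hl, rfl⟩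
    have := hf _ hneg
    rw [hS.2.1, hev] at this
    simp at this
  have hstep1 : Step S C0 .tConflict (.search M Cs) (.conflict M Cs C) :=
    Step.tConflict hinf hvalid hvalM
  have hstep2 : Step S C0 .learn (.conflict M Cs C) (.conflict M (Cs ∪ {C}) C) :=
    Step.learn hnew
  have hstep3 : Step S C0 .restart (.conflict M (Cs ∪ {C}) C)
      (.search [] (Cs ∪ {C})) := Step.restart
  have htr2 : Trace S C0 (.search M Cs)
      [Rule.tConflict, Rule.learn, Rule.restart]
      [.conflict M Cs C, .conflict M (Cs ∪ {C}) C, .search [] (Cs ∪ {C})]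
      (.search [] (Cs ∪ {C})) :=
    Trace.step hstep1 (Trace.step hstep2 (Trace.step hstep3 (Trace.refl _)))
  have hlen : C.toList.length = C.card := Finset.length_toList C
  rw [List.nil_append] at htr1
  refine ⟨sts1 ++ [State.conflict M Cs C, State.conflict M (Cs ∪ {C}) C,
    State.search [] (Cs ∪ {C})], ?_, ?_, ?_⟩
  · rw [← hlen]
    exact trace_append htr1 htr2
  · simp
  · rw [List.countP_append]
    have h1 : (List.replicate C.card Rule.decide).countP (fun r => r.isTheory) = 0 := by
      apply List.countP_eq_zero.mpr
      intro r hr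
      rw [List.eq_of_mem_replicate hr]
      simp [Rule.isTheory]
    rw [h1]
    rfl


end MCSATPaper
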